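/- Abel inversion: let h : (0,1] → ℝ be continuous and suppose g : (0,1] → ℝ is continuous and satisfies ∫_x^1 g(ε)/√(ε² − x²) dε = h(x) for all x ∈ (0,1). If g₁ and g₂ are two continuous solutions, then g₁ = g₂ on (0,1). -/

import Mathlib

open MeasureTheory intervalIntegral Real Set


lemma aux_rpow_left (a b : ℝ) :
    IntervalIntegrable (fun x => (x - a) ^ (-(1/2) : ℝ)) volume a b := by
  have h := intervalIntegral.intervalIntegrable_rpow' (a := 0) (b := b - a)
    (r := (-(1/2) : ℝ)) (by norm_num)
  simpa using h.comp_sub_right a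

lemma aux_sqrt_rpow {t : ℝ} (ht : 0 ≤ t) : 1 / Real.sqrt t = t ^ (-(1/2):ℝ) := by
  rw [Real.rpow_neg ht, Real.sqrt_eq_rpow, one_div]

lemma aux_L3 (g : ℝ → ℝ) (x : ℝ) (hx : 0 < x) (hx1 : x ≤ 1)
    (hg : ContinuousOn g (Icc x 1)) :
    IntervalIntegrable (fun ε => g ε / Real.sqrt (ε^2 - x^2)) volume x 1 := by
  obtain ⟨M, hM⟩ := (isCompact_Icc.exists_bound_of_continuousOn hg)
  have hM0 : 0 ≤ M := le_trans (norm_nonneg _) (hM x (by simp [hx1]))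
  rw [intervalIntegrable_iff_integrableOn_Ioc_of_le hx1]
  have hmaj : IntegrableOn
      (fun ε => M * ((2*x) ^ (-(1/2):ℝ) * (ε - x) ^ (-(1/2):ℝ))) (Ioc x 1) volume := by
    have := ((aux_rpow_left x 1).const_mul (M * (2*x) ^ (-(1/2):ℝ)))
    rw [intervalIntegrable_iff_integrableOn_Ioc_of_le hx1] at this
    refine this.congr_fun (fun ε _ => by ring) measurableSet_Ioc
  refine hmaj.integrable.mono' ?_ ?_
  · -- a.e. strong measurability
    have hgm : AEStronglyMeasurable g (volume.restrict (Ioc x 1)) :=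
      (hg.mono (Ioc_subset_Icc_self)).aestronglyMeasurable measurableSet_Ioc
    have hc : Continuous (fun ε : ℝ => Real.sqrt (ε^2 - x^2)) :=
      Real.continuous_sqrt.comp ((continuous_pow 2).sub continuous_const)
    exact (hgm.aemeasurable.div hc.measurable.aemeasurable).aestronglyMeasurable
  · rw [ae_restrict_iff' measurableSet_Ioc]
    filter_upwards with ε hε
    have hεx : x < ε := hε.1
    have h1 : (2*x) * (ε - x) ≤ ε^2 - x^2 := by nlinarith
    have h2 : 0 < (2*x) * (ε - x) := by nlinarith
    have hs : Real.sqrt ((2*x) * (ε-x)) ≤ Real.sqrt (ε^2 - x^2) := Real.sqrt_le_sqrt h1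
    have hspos : 0 < Real.sqrt ((2*x)*(ε-x)) := Real.sqrt_pos.2 h2
    have hnorm : ‖g ε / Real.sqrt (ε^2 - x^2)‖ ≤ M / Real.sqrt ((2*x)*(ε-x)) := by
      rw [norm_div, Real.norm_eq_abs (Real.sqrt _), abs_of_nonneg (Real.sqrt_nonneg _)]
      exact div_le_div₀ (by positivity) (hM ε (Ioc_subset_Icc_self hε)) hspos hs
    refine hnorm.trans (le_of_eq ?_)
    rw [Real.sqrt_mul (by linarith : (0:ℝ) ≤ 2*x), div_eq_mul_one_div, one_div,
      mul_inv, ← aux_sqrt_rpow (by linarith : (0:ℝ) ≤ 2*x),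
      ← aux_sqrt_rpow (by linarith : (0:ℝ) ≤ ε - x)]
    ring

lemma aux_rpow_right (a b : ℝ) :
    IntervalIntegrable (fun x => (b - x) ^ (-(1/2) : ℝ)) volume a b := by
  have h := intervalIntegral.intervalIntegrable_rpow' (a := b - a) (b := 0)
    (r := (-(1/2) : ℝ)) (by norm_num)
  simpa using h.comp_sub_left b

lemma aux_K_meas (y ε : ℝ) :
    Measurable (fun x => x / (Real.sqrt (x^2 - y^2) * Real.sqrt (ε^2 - x^2))) := by
  have h1 : Continuous (fun x : ℝ => Real.sqrt (x^2 - y^2) * Real.sqrt (ε^2 - x^2)) := by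
    exact (Real.continuous_sqrt.comp ((continuous_pow 2).sub continuous_const)).mul
      (Real.continuous_sqrt.comp (continuous_const.sub (continuous_pow 2)))
  exact measurable_id.div h1.measurable

lemma aux_L5 (y ε : ℝ) (hy : 0 < y) (hyε : y < ε) :
    IntervalIntegrable
      (fun x => x / (Real.sqrt (x^2 - y^2) * Real.sqrt (ε^2 - x^2))) volume y ε := by
  set m := (y + ε)/2 with hm
  have hym : y < m := by rw [hm]; linarith
  have hmε : m < ε := by rw [hm]; linarith
  have hmeas := aux_K_meas y ε
  have part1 : IntervalIntegrable
      (fun x => x / (Real.sqrt (x^2 - y^2) * Real.sqrt (ε^2 - x^2))) volume y m := by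
    rw [intervalIntegrable_iff_integrableOn_Ioc_of_le hym.le]
    have hmaj : IntegrableOn
        (fun x => (ε / (Real.sqrt (2*y) * Real.sqrt (ε^2 - m^2))) * (x - y) ^ (-(1/2):ℝ))
        (Ioc y m) volume := by
      have := (aux_rpow_left y m).const_mul (ε / (Real.sqrt (2*y) * Real.sqrt (ε^2 - m^2)))
      rw [intervalIntegrable_iff_integrableOn_Ioc_of_le hym.le] at this
      exact this
    refine hmaj.integrable.mono' hmeas.aestronglyMeasurable ?_
    rw [ae_restrict_iff' measurableSet_Ioc]
    filter_upwards with x hx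
    have hyx : y < x := hx.1
    have hxm : x ≤ m := hx.2
    have hB : Real.sqrt (ε^2 - m^2) ≤ Real.sqrt (ε^2 - x^2) := by
      apply Real.sqrt_le_sqrt; nlinarith
    have hA : Real.sqrt (2*y) * Real.sqrt (x - y) ≤ Real.sqrt (x^2 - y^2) := by
      rw [← Real.sqrt_mul (by linarith)]
      apply Real.sqrt_le_sqrt; nlinarith
    have hBpos : 0 < Real.sqrt (ε^2 - m^2) := Real.sqrt_pos.2 (by nlinarith)
    have hApos : 0 < Real.sqrt (2*y) * Real.sqrt (x - y) := by
      apply mul_pos (Real.sqrt_pos.2 (by linarith)) (Real.sqrt_pos.2 (by linarith))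
    have hD : 0 < (Real.sqrt (2*y) * Real.sqrt (x - y)) * Real.sqrt (ε^2 - m^2) :=
      mul_pos hApos hBpos
    have hle : (Real.sqrt (2*y) * Real.sqrt (x - y)) * Real.sqrt (ε^2 - m^2)
        ≤ Real.sqrt (x^2 - y^2) * Real.sqrt (ε^2 - x^2) :=
      mul_le_mul hA hB hBpos.le (Real.sqrt_nonneg _)
    have hxnn : (0:ℝ) ≤ x := by linarith
    rw [Real.norm_eq_abs, abs_of_nonneg (by positivity)]
    calc x / (Real.sqrt (x^2 - y^2) * Real.sqrt (ε^2 - x^2))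
        ≤ ε / ((Real.sqrt (2*y) * Real.sqrt (x - y)) * Real.sqrt (ε^2 - m^2)) := by
          apply div_le_div₀ (by linarith) (by linarith) hD hle
      _ = (ε / (Real.sqrt (2*y) * Real.sqrt (ε^2 - m^2))) * (x - y) ^ (-(1/2):ℝ) := by
          rw [← aux_sqrt_rpow (by linarith : (0:ℝ) ≤ x - y)]
          field_simp
  have part2 : IntervalIntegrable
      (fun x => x / (Real.sqrt (x^2 - y^2) * Real.sqrt (ε^2 - x^2))) volume m ε := by
    rw [intervalIntegrable_iff_integrableOn_Ioc_of_le hmε.le]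
    have hmaj : IntegrableOn
        (fun x => (ε / (Real.sqrt (2*y) * Real.sqrt (m^2 - y^2))) * (ε - x) ^ (-(1/2):ℝ))
        (Ioc m ε) volume := by
      have := (aux_rpow_right m ε).const_mul (ε / (Real.sqrt (2*y) * Real.sqrt (m^2 - y^2)))
      rw [intervalIntegrable_iff_integrableOn_Ioc_of_le hmε.le] at this
      exact this
    refine hmaj.integrable.mono' hmeas.aestronglyMeasurable ?_
    rw [ae_restrict_iff' measurableSet_Ioc]
    filter_upwards with x hx
    have hmx : m < x := hx.1
    have hxε : x ≤ ε := hx.2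
    rcases eq_or_lt_of_le hxε with heq | hxε
    · subst heq
      simp [Real.sqrt_eq_zero', Real.zero_rpow]
    have hA : Real.sqrt (m^2 - y^2) ≤ Real.sqrt (x^2 - y^2) := by
      apply Real.sqrt_le_sqrt; nlinarith
    have hB : Real.sqrt (2*y) * Real.sqrt (ε - x) ≤ Real.sqrt (ε^2 - x^2) := by
      rw [← Real.sqrt_mul (by linarith)]
      apply Real.sqrt_le_sqrt; nlinarith
    have hApos : 0 < Real.sqrt (m^2 - y^2) := Real.sqrt_pos.2 (by nlinarith)
    have hBpos : 0 < Real.sqrt (2*y) * Real.sqrt (ε - x) :=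
      mul_pos (Real.sqrt_pos.2 (by linarith)) (Real.sqrt_pos.2 (by linarith))
    have hD : 0 < Real.sqrt (m^2 - y^2) * (Real.sqrt (2*y) * Real.sqrt (ε - x)) :=
      mul_pos hApos hBpos
    have hle : Real.sqrt (m^2 - y^2) * (Real.sqrt (2*y) * Real.sqrt (ε - x))
        ≤ Real.sqrt (x^2 - y^2) * Real.sqrt (ε^2 - x^2) :=
      mul_le_mul hA hB hBpos.le (Real.sqrt_nonneg _)
    rw [Real.norm_eq_abs, abs_of_nonneg (div_nonneg (by linarith) (by positivity))]
    calc x / (Real.sqrt (x^2 - y^2) * Real.sqrt (ε^2 - x^2))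
        ≤ ε / (Real.sqrt (m^2 - y^2) * (Real.sqrt (2*y) * Real.sqrt (ε - x))) := by
          apply div_le_div₀ (by linarith) (by linarith) hD hle
      _ = (ε / (Real.sqrt (2*y) * Real.sqrt (m^2 - y^2))) * (ε - x) ^ (-(1/2):ℝ) := by
          rw [← aux_sqrt_rpow (by linarith : (0:ℝ) ≤ ε - x)]
          field_simp
  exact part1.trans part2

lemma aux_pi (y ε : ℝ) (hy : 0 < y) (hyε : y < ε) :
    ∫ x in y..ε, x / (Real.sqrt (x^2 - y^2) * Real.sqrt (ε^2 - x^2)) = Real.pi / 2 := by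
  have hd : (0:ℝ) < ε^2 - y^2 := by nlinarith
  set F : ℝ → ℝ := fun x => Real.arcsin ((2*x^2 - y^2 - ε^2)/(ε^2 - y^2)) / 2 with hF
  have hcont : Continuous F := by
    apply Continuous.div_const
    apply Real.continuous_arcsin.comp
    exact (((continuous_const.mul (continuous_pow 2)).sub continuous_const).sub continuous_const).div_const _
  have hderiv : ∀ x ∈ Ioo y ε, HasDerivWithinAt F
      (x / (Real.sqrt (x^2 - y^2) * Real.sqrt (ε^2 - x^2))) (Ioi x) x := by
    intro x hx
    have hyx : y < x := hx.1
    have hxε : x < ε := hx.2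
    set u : ℝ := (2*x^2 - y^2 - ε^2)/(ε^2 - y^2) with hu
    have hu1 : u < 1 := by rw [hu, div_lt_one hd]; nlinarith
    have hu2 : -1 < u := by rw [hu, lt_div_iff₀ hd]; nlinarith
    have hinner : HasDerivAt (fun x : ℝ => (2*x^2 - y^2 - ε^2)/(ε^2 - y^2))
        (4*x/(ε^2 - y^2)) x := by
      have h1 : HasDerivAt (fun x : ℝ => 2*x^2) (4*x) x := by
        have := (hasDerivAt_pow 2 x).const_mul (2:ℝ)
        exact this.congr_deriv (by simp; ring)
      exact ((h1.sub_const (y^2)).sub_const (ε^2)).div_const _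
    have harc := Real.hasDerivAt_arcsin (ne_of_gt hu2) (ne_of_lt hu1)
    have hcomp := (harc.comp x hinner).div_const 2
    have hAB : Real.sqrt (x^2-y^2) ^ 2 = x^2 - y^2 := Real.sq_sqrt (by nlinarith)
    have hBB : Real.sqrt (ε^2-x^2) ^ 2 = ε^2 - x^2 := Real.sq_sqrt (by nlinarith)
    have hApos : 0 < Real.sqrt (x^2-y^2) := Real.sqrt_pos.2 (by nlinarith)
    have hBpos : 0 < Real.sqrt (ε^2-x^2) := Real.sqrt_pos.2 (by nlinarith)
    have key : 1 - u^2 =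
        (2 * Real.sqrt (x^2-y^2) * Real.sqrt (ε^2-x^2) / (ε^2 - y^2))^2 := by
      have e1 : (2 * Real.sqrt (x^2-y^2) * Real.sqrt (ε^2-x^2) / (ε^2 - y^2))^2
          = 4*(x^2-y^2)*(ε^2-x^2)/(ε^2-y^2)^2 := by
        rw [div_pow, mul_pow, mul_pow, hAB, hBB]; ring
      rw [e1, hu]
      field_simp
      ring
    have hsq : Real.sqrt (1 - u^2) =
        2 * Real.sqrt (x^2-y^2) * Real.sqrt (ε^2-x^2) / (ε^2 - y^2) := by
      rw [key, Real.sqrt_sq (by positivity)]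
    have heqd : 1 / Real.sqrt (1 - u^2) * (4*x/(ε^2 - y^2)) / 2
        = x / (Real.sqrt (x^2 - y^2) * Real.sqrt (ε^2 - x^2)) := by
      rw [hsq]
      field_simp
      ring
    have : HasDerivAt F (1 / Real.sqrt (1 - u^2) * (4*x/(ε^2 - y^2)) / 2) x := hcomp
    rw [heqd] at this
    exact this.hasDerivWithinAt
  rw [intervalIntegral.integral_eq_sub_of_hasDeriv_right_of_le hyε.le hcont.continuousOn
    hderiv (aux_L5 y ε hy hyε)]
  have h1 : (2*ε^2 - y^2 - ε^2)/(ε^2 - y^2) = 1 := by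
    rw [show 2*ε^2 - y^2 - ε^2 = ε^2 - y^2 by ring, div_self hd.ne']
  have h2 : (2*y^2 - y^2 - ε^2)/(ε^2 - y^2) = -1 := by
    rw [show 2*y^2 - y^2 - ε^2 = -(ε^2 - y^2) by ring, neg_div, div_self hd.ne']
  rw [hF]
  simp only [h1, h2]
  rw [Real.arcsin_one, Real.arcsin_neg_one]
  ring

lemma aux_rint (a b : ℝ) (hab : a ≤ b) :
    ∫ x in a..b, (x - a) ^ (-(1/2):ℝ) = 2 * (b - a) ^ ((1/2):ℝ) := by
  rw [intervalIntegral.integral_comp_sub_right (fun t => t ^ (-(1/2):ℝ)) a]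
  rw [integral_rpow (Or.inl (by norm_num))]
  rw [sub_self, Real.zero_rpow (by norm_num)]
  norm_num
  rw [div_eq_mul_inv]
  norm_num
  ring

set_option maxHeartbeats 1000000 in
lemma aux_main (f : ℝ → ℝ) (hf : ContinuousOn f (Ioc 0 1))
    (H : ∀ x : ℝ, 0 < x → x < 1 → ∫ ε in x..(1:ℝ), f ε / Real.sqrt (ε^2 - x^2) = 0)
    {y : ℝ} (hy : 0 < y) (hy1 : y < 1) : ∫ t in y..(1:ℝ), f t = 0 := by
  -- Tietze extension of f restricted to [y,1]
  have hIcc : Icc y 1 ⊆ Ioc 0 1 := fun t ht => ⟨lt_of_lt_of_le hy ht.1, ht.2⟩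
  have hfIcc : ContinuousOn f (Icc y 1) := hf.mono hIcc
  obtain ⟨G, hG⟩ := ContinuousMap.exists_restrict_eq (Y := ℝ) isClosed_Icc
    ⟨_, continuousOn_iff_continuous_restrict.mp hfIcc⟩
  set g : ℝ → ℝ := ⇑G with hgdef
  have hg : Continuous g := G.continuous
  have hgf : ∀ t ∈ Icc y 1, g t = f t := by
    intro t ht
    have := congrFun (congrArg DFunLike.coe hG) ⟨t, ht⟩
    simpa using this
  obtain ⟨M, hM⟩ := isCompact_Icc.exists_bound_of_continuousOn
    (hg.continuousOn : ContinuousOn g (Icc y 1))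
  have hM0 : 0 ≤ M := le_trans (norm_nonneg _) (hM y (by constructor <;> [rfl; linarith]))
  -- the region and integrand
  set S : Set (ℝ × ℝ) := {p | y < p.1 ∧ p.1 < p.2 ∧ p.2 < 1} with hSdef
  have hS : MeasurableSet S := by
    have : S = {p : ℝ × ℝ | y < p.1} ∩ ({p | p.1 < p.2} ∩ {p | p.2 < 1}) := rfl
    rw [this]
    exact (measurableSet_lt measurable_const measurable_fst).inter
      ((measurableSet_lt measurable_fst measurable_snd).inter
        (measurableSet_lt measurable_snd measurable_const))
  set H2 : ℝ × ℝ → ℝ := fun p =>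
    g p.2 * (p.1 / (Real.sqrt (p.1^2 - y^2) * Real.sqrt (p.2^2 - p.1^2))) with hH2def
  have hH2m : Measurable H2 := by
    have c1 : Continuous (fun p : ℝ × ℝ => Real.sqrt (p.1^2 - y^2) * Real.sqrt (p.2^2 - p.1^2)) :=
      (Real.continuous_sqrt.comp ((continuous_fst.pow 2).sub continuous_const)).mul
        (Real.continuous_sqrt.comp ((continuous_snd.pow 2).sub (continuous_fst.pow 2)))
    exact ((hg.comp continuous_snd).measurable).mul (measurable_fst.div c1.measurable)
  set Φ : ℝ × ℝ → ℝ := S.indicator H2 with hΦdef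
  have hΦm : Measurable Φ := hH2m.indicator hS
  -- sections
  have sect1 : ∀ x : ℝ, x ∈ Ioo y 1 → (fun ε => Φ (x, ε)) =
      (Ioo x 1).indicator (fun ε => H2 (x, ε)) := by
    intro x hx
    funext ε
    by_cases hε : ε ∈ Ioo x 1
    · rw [hΦdef, Set.indicator_of_mem (show (x,ε) ∈ S from ⟨hx.1, hε.1, hε.2⟩),
        Set.indicator_of_mem hε]
    · rw [hΦdef, Set.indicator_of_notMem (fun hmem => hε ⟨hmem.2.1, hmem.2.2⟩),
        Set.indicator_of_notMem hε]
  have sect0 : ∀ x : ℝ, x ∉ Ioo y 1 → (fun ε => Φ (x, ε)) = fun _ => (0:ℝ) := by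
    intro x hx
    funext ε
    exact Set.indicator_of_notMem
      (fun hmem => hx ⟨hmem.1, lt_trans hmem.2.1 hmem.2.2⟩) _
  have sectε1 : ∀ ε : ℝ, ε ∈ Ioo y 1 → (fun x => Φ (x, ε)) =
      (Ioo y ε).indicator (fun x => H2 (x, ε)) := by
    intro ε hε
    funext x
    by_cases hx : x ∈ Ioo y ε
    · rw [hΦdef, Set.indicator_of_mem (show (x,ε) ∈ S from ⟨hx.1, hx.2, hε.2⟩),
        Set.indicator_of_mem hx]
    · rw [hΦdef, Set.indicator_of_notMem (fun hmem => hx ⟨hmem.1, hmem.2.1⟩),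
        Set.indicator_of_notMem hx]
  have sectε0 : ∀ ε : ℝ, ε ∉ Ioo y 1 → (fun x => Φ (x, ε)) = fun _ => (0:ℝ) := by
    intro ε hε
    funext x
    exact Set.indicator_of_notMem
      (fun hmem => hε ⟨lt_trans hmem.1 hmem.2.1, hmem.2.2⟩) _
  -- integrability of each section
  have hInt1 : ∀ x : ℝ, Integrable (fun ε => Φ (x, ε)) volume := by
    intro x
    by_cases hx : x ∈ Ioo y 1
    · rw [sect1 x hx]
      rw [integrable_indicator_iff measurableSet_Ioo]
      have hx0 : (0:ℝ) < x := lt_trans hy hx.1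
      have h3 := aux_L3 (fun ε => g ε * (x / Real.sqrt (x^2 - y^2))) x hx0 hx.2.le
        (hg.continuousOn.mul continuousOn_const)
      rw [intervalIntegrable_iff_integrableOn_Ioc_of_le hx.2.le] at h3
      refine (h3.mono_set Ioo_subset_Ioc_self).congr_fun ?_ measurableSet_Ioo
      intro ε _
      simp only [hH2def]
      ring
    · rw [sect0 x hx]
      exact integrable_zero _ _ _
  -- pointwise bound on sections
  have hptb : ∀ x, x ∈ Ioo y 1 → ∀ ε : ℝ, ‖Φ (x, ε)‖ ≤
      (Ioo x 1).indicator
        (fun ε => (M * x / (Real.sqrt (x^2 - y^2) * Real.sqrt (2*y))) * (ε - x) ^ (-(1/2):ℝ)) ε := by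
    intro x hx ε
    have hx0 : (0:ℝ) < x := lt_trans hy hx.1
    have hfun := congrFun (sect1 x hx) ε
    by_cases hε : ε ∈ Ioo x 1
    · rw [hfun, Set.indicator_of_mem hε, Set.indicator_of_mem hε]
      have hA : 0 < Real.sqrt (x^2 - y^2) := Real.sqrt_pos.2 (by nlinarith [hx.1])
      have hB2 : Real.sqrt (2*y) * Real.sqrt (ε - x) ≤ Real.sqrt (ε^2 - x^2) := by
        rw [← Real.sqrt_mul (by linarith)]
        apply Real.sqrt_le_sqrt
        nlinarith [hε.1, hε.2, hx.1]
      have hBpos : 0 < Real.sqrt (2*y) * Real.sqrt (ε - x) :=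
        mul_pos (Real.sqrt_pos.2 (by linarith)) (Real.sqrt_pos.2 (by linarith [hε.1]))
      have hgε : ‖g ε‖ ≤ M := hM ε ⟨le_trans hx.1.le hε.1.le, hε.2.le⟩
      have hQnn : 0 ≤ x / (Real.sqrt (x^2 - y^2) * Real.sqrt (ε^2 - x^2)) := by positivity
      simp only [hH2def]
      rw [norm_mul, Real.norm_eq_abs (x / _), abs_of_nonneg hQnn]
      calc ‖g ε‖ * (x / (Real.sqrt (x^2 - y^2) * Real.sqrt (ε^2 - x^2)))
          ≤ M * (x / (Real.sqrt (x^2 - y^2) * (Real.sqrt (2*y) * Real.sqrt (ε - x)))) := by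
            apply mul_le_mul hgε ?_ hQnn hM0
            exact div_le_div_of_nonneg_left hx0.le (mul_pos hA hBpos)
              (mul_le_mul_of_nonneg_left hB2 hA.le)
        _ = (M * x / (Real.sqrt (x^2 - y^2) * Real.sqrt (2*y))) * (ε - x) ^ (-(1/2):ℝ) := by
            rw [← aux_sqrt_rpow (by linarith [hε.1] : (0:ℝ) ≤ ε - x)]
            field_simp
    · rw [hfun, Set.indicator_of_notMem hε, Set.indicator_of_notMem hε, norm_zero]
  -- bound on the integral of norms
  have hNb : ∀ x, x ∈ Ioo y 1 → (∫ ε, ‖Φ (x, ε)‖) ≤ (M/y) * (x - y) ^ (-(1/2):ℝ) := by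
    intro x hx
    have hx0 : (0:ℝ) < x := lt_trans hy hx.1
    set D : ℝ := M * x / (Real.sqrt (x^2 - y^2) * Real.sqrt (2*y)) with hD
    have hA : 0 < Real.sqrt (x^2 - y^2) := Real.sqrt_pos.2 (by nlinarith [hx.1])
    have hDnn : 0 ≤ D := by rw [hD]; positivity
    have hψ : IntegrableOn (fun ε => D * (ε - x) ^ (-(1/2):ℝ)) (Ioo x 1) volume := by
      have := (aux_rpow_left x 1).const_mul D
      rw [intervalIntegrable_iff_integrableOn_Ioc_of_le hx.2.le] at this
      exact this.mono_set Ioo_subset_Ioc_self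
    have hψind : Integrable ((Ioo x 1).indicator (fun ε => D * (ε - x) ^ (-(1/2):ℝ))) volume :=
      (integrable_indicator_iff measurableSet_Ioo).2 hψ
    have step1 : (∫ ε, ‖Φ (x, ε)‖) ≤
        ∫ ε, (Ioo x 1).indicator (fun ε => D * (ε - x) ^ (-(1/2):ℝ)) ε := by
      apply integral_mono_of_nonneg (ae_of_all _ (fun ε => norm_nonneg _)) hψind
      exact ae_of_all _ (hptb x hx)
    have step2 : (∫ ε, (Ioo x 1).indicator (fun ε => D * (ε - x) ^ (-(1/2):ℝ)) ε)
        = D * (2 * (1 - x) ^ ((1/2):ℝ)) := by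
      rw [MeasureTheory.integral_indicator measurableSet_Ioo, ← MeasureTheory.integral_Ioc_eq_integral_Ioo,
        ← intervalIntegral.integral_of_le hx.2.le, intervalIntegral.integral_const_mul,
        aux_rint x 1 hx.2.le]
    have step3 : D * (2 * (1 - x) ^ ((1/2):ℝ)) ≤ (M/y) * (x - y) ^ (-(1/2):ℝ) := by
      have h1x : (1 - x) ^ ((1/2):ℝ) ≤ 1 :=
        Real.rpow_le_one (by linarith [hx.2]) (by linarith [hx.2]) (by norm_num)
      have hstep : D * (2 * (1 - x) ^ ((1/2):ℝ)) ≤ D * 2 := by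
        apply mul_le_mul_of_nonneg_left ?_ hDnn
        nlinarith [Real.rpow_nonneg (by linarith [hx.2] : (0:ℝ) ≤ 1 - x) ((1/2):ℝ)]
      refine hstep.trans ?_
      have hAle : Real.sqrt (2*y) * Real.sqrt (x - y) ≤ Real.sqrt (x^2 - y^2) := by
        rw [← Real.sqrt_mul (by linarith)]
        apply Real.sqrt_le_sqrt
        nlinarith [hx.1]
      have hs2y : 0 < Real.sqrt (2*y) := Real.sqrt_pos.2 (by linarith)
      have hsxy : 0 < Real.sqrt (x - y) := Real.sqrt_pos.2 (by linarith [hx.1])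
      have hd1 : D * 2 ≤ 2 * M / (Real.sqrt (2*y) * Real.sqrt (x - y) * Real.sqrt (2*y)) := by
        rw [hD]
        rw [div_mul_eq_mul_div, mul_comm (M*x) 2, ← mul_assoc]
        apply div_le_div₀ (by positivity) (by nlinarith [hx.2]) (by positivity)
        apply mul_le_mul_of_nonneg_right hAle hs2y.le
      refine hd1.trans (le_of_eq ?_)
      have h2y : Real.sqrt (2*y) * Real.sqrt (2*y) = 2*y := Real.mul_self_sqrt (by linarith)
      rw [show Real.sqrt (2*y) * Real.sqrt (x - y) * Real.sqrt (2*y)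
          = (Real.sqrt (2*y) * Real.sqrt (2*y)) * Real.sqrt (x - y) by ring, h2y,
        ← aux_sqrt_rpow (by linarith [hx.1] : (0:ℝ) ≤ x - y)]
      field_simp
    exact step1.trans (le_of_eq step2 |>.trans step3)
  -- integrability of x ↦ ∫ ε, ‖Φ (x, ε)‖
  have hInt2 : Integrable (fun x => ∫ ε, ‖Φ (x, ε)‖) volume := by
    have hmaj : Integrable ((Ioo y 1).indicator (fun x => (M/y) * (x - y) ^ (-(1/2):ℝ))) volume := by
      apply (integrable_indicator_iff measurableSet_Ioo).2
      have := (aux_rpow_left y 1).const_mul (M/y)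
      rw [intervalIntegrable_iff_integrableOn_Ioc_of_le hy1.le] at this
      exact this.mono_set Ioo_subset_Ioc_self
    have hmeasN : AEStronglyMeasurable (fun x => ∫ ε, ‖Φ (x, ε)‖) volume :=
      (hΦm.norm.stronglyMeasurable.integral_prod_right').aestronglyMeasurable
    apply hmaj.mono' hmeasN
    apply ae_of_all
    intro x
    by_cases hx : x ∈ Ioo y 1
    · rw [Set.indicator_of_mem hx, Real.norm_eq_abs,
        abs_of_nonneg (integral_nonneg (fun ε => norm_nonneg _))]
      exact hNb x hx
    · have hz : (fun ε => ‖Φ (x, ε)‖) = fun _ => (0:ℝ) := by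
        funext ε
        rw [congrFun (sect0 x hx) ε, norm_zero]
      rw [hz, MeasureTheory.integral_zero, norm_zero, Set.indicator_of_notMem hx]
  -- Φ is integrable on the product
  have hΦint : Integrable Φ (volume.prod volume) := by
    refine (integrable_prod_iff hΦm.aestronglyMeasurable).2 ⟨ae_of_all _ hInt1, hInt2⟩
  -- Fubini
  have hswap : (∫ x, ∫ ε, Φ (x, ε)) = ∫ ε, ∫ x, Φ (x, ε) :=
    MeasureTheory.integral_integral_swap hΦint
  -- LHS is zero
  have hL : ∀ x : ℝ, (∫ ε, Φ (x, ε)) = 0 := by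
    intro x
    by_cases hx : x ∈ Ioo y 1
    · have hx0 : (0:ℝ) < x := lt_trans hy hx.1
      rw [sect1 x hx, MeasureTheory.integral_indicator measurableSet_Ioo,
        ← MeasureTheory.integral_Ioc_eq_integral_Ioo, ← intervalIntegral.integral_of_le hx.2.le]
      have hEq : Set.EqOn (fun ε => H2 (x, ε))
          (fun ε => (x / Real.sqrt (x^2 - y^2)) * (f ε / Real.sqrt (ε^2 - x^2)))
          (Set.uIcc x 1) := by
        intro ε hε
        rw [Set.uIcc_of_le hx.2.le] at hε
        have hgfε : g ε = f ε := hgf ε ⟨le_trans hx.1.le hε.1, hε.2⟩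
        simp only [hH2def]
        rw [hgfε]
        ring
      rw [intervalIntegral.integral_congr hEq, intervalIntegral.integral_const_mul,
        H x hx0 hx.2, mul_zero]
    · rw [sect0 x hx]
      exact MeasureTheory.integral_zero _ _
  -- RHS computation
  have hR : ∀ ε : ℝ, (∫ x, Φ (x, ε)) =
      (Ioo y 1).indicator (fun ε => (Real.pi/2) * f ε) ε := by
    intro ε
    by_cases hε : ε ∈ Ioo y 1
    · rw [sectε1 ε hε, MeasureTheory.integral_indicator measurableSet_Ioo,
        ← MeasureTheory.integral_Ioc_eq_integral_Ioo, ← intervalIntegral.integral_of_le hε.1.le,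
        Set.indicator_of_mem hε]
      have hgfε : g ε = f ε := hgf ε ⟨hε.1.le, hε.2.le⟩
      simp only [hH2def]
      rw [intervalIntegral.integral_const_mul, aux_pi y ε hy hε.1, hgfε]
      ring
    · rw [sectε0 ε hε, Set.indicator_of_notMem hε]
      exact MeasureTheory.integral_zero _ _
  -- put everything together
  have hz : (0:ℝ) = (Real.pi/2) * ∫ t in y..(1:ℝ), f t := by
    calc (0:ℝ) = ∫ x : ℝ, (0:ℝ) := by simp
      _ = ∫ x, ∫ ε, Φ (x, ε) := by
          congr 1
          funext x
          rw [hL x]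
      _ = ∫ ε, ∫ x, Φ (x, ε) := hswap
      _ = ∫ ε, (Ioo y 1).indicator (fun ε => (Real.pi/2) * f ε) ε := by
          congr 1
          funext ε
          rw [hR ε]
      _ = ∫ ε in y..(1:ℝ), (Real.pi/2) * f ε := by
          rw [MeasureTheory.integral_indicator measurableSet_Ioo, ← MeasureTheory.integral_Ioc_eq_integral_Ioo,
            ← intervalIntegral.integral_of_le hy1.le]
      _ = (Real.pi/2) * ∫ t in y..(1:ℝ), f t := intervalIntegral.integral_const_mul _ _
  have hπ : (Real.pi/2) ≠ 0 := by positivity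
  field_simp at hz
  rcases mul_eq_zero.mp (by linarith : (∫ t in y..(1:ℝ), f t) * Real.pi = 0) with h | h
  · exact h
  · exact absurd h Real.pi_ne_zero

/-- Abel inversion uniqueness: if g₁, g₂ are continuous on (0,1] and both satisfy
∫_x^1 g(ε)/√(ε²−x²) dε = h(x) for all x ∈ (0,1), with h continuous on (0,1],
then g₁ = g₂ on (0,1). -/
theorem stmt_18 (h g₁ g₂ : ℝ → ℝ)
    (hh : ContinuousOn h (Set.Ioc 0 1))
    (hg₁ : ContinuousOn g₁ (Set.Ioc 0 1)) (hg₂ : ContinuousOn g₂ (Set.Ioc 0 1))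
    (heq₁ : ∀ x : ℝ, 0 < x → x < 1 →
      ∫ ε in x..(1 : ℝ), g₁ ε / Real.sqrt (ε ^ 2 - x ^ 2) = h x)
    (heq₂ : ∀ x : ℝ, 0 < x → x < 1 →
      ∫ ε in x..(1 : ℝ), g₂ ε / Real.sqrt (ε ^ 2 - x ^ 2) = h x) :
    Set.EqOn g₁ g₂ (Set.Ioo 0 1) := by
  intro z hz
  set f : ℝ → ℝ := fun t => g₁ t - g₂ t with hfdef
  have hfc : ContinuousOn f (Ioc 0 1) := hg₁.sub hg₂
  have H : ∀ x : ℝ, 0 < x → x < 1 →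
      ∫ ε in x..(1:ℝ), f ε / Real.sqrt (ε^2 - x^2) = 0 := by
    intro x hx0 hx1
    have hsub : Icc x 1 ⊆ Ioc 0 1 := fun t ht => ⟨lt_of_lt_of_le hx0 ht.1, ht.2⟩
    have i1 := aux_L3 g₁ x hx0 hx1.le (hg₁.mono hsub)
    have i2 := aux_L3 g₂ x hx0 hx1.le (hg₂.mono hsub)
    have hfe : (fun ε => f ε / Real.sqrt (ε^2 - x^2)) =
        fun ε => g₁ ε / Real.sqrt (ε^2 - x^2) - g₂ ε / Real.sqrt (ε^2 - x^2) := by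
      funext ε
      rw [hfdef]
      exact sub_div _ _ _
    rw [hfe, intervalIntegral.integral_sub i1 i2, heq₁ x hx0 hx1, heq₂ x hx0 hx1, sub_self]
  have hz0 : (0:ℝ) < z := hz.1
  have hz1 : z < 1 := hz.2
  have hIoo : Ioo (0:ℝ) 1 ⊆ Ioc 0 1 := Ioo_subset_Ioc_self
  have hcontz : ContinuousAt f z := (hfc.mono hIoo).continuousAt (Ioo_mem_nhds hz0 hz1)
  have hfi : IntervalIntegrable f volume 1 z := by
    apply ContinuousOn.intervalIntegrable
    apply hfc.mono
    rw [Set.uIcc_comm, Set.uIcc_of_le hz1.le]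
    exact fun t ht => ⟨lt_of_lt_of_le hz0 ht.1, ht.2⟩
  have hms : StronglyMeasurableAtFilter f (nhds z) volume :=
    (hfc.mono hIoo).stronglyMeasurableAtFilter isOpen_Ioo z hz
  have hder : HasDerivAt (fun u => ∫ t in (1:ℝ)..u, f t) (f z) z :=
    intervalIntegral.integral_hasDerivAt_right hfi hms hcontz
  have hloc : (fun _ : ℝ => (0:ℝ)) =ᶠ[nhds z] (fun u => ∫ t in (1:ℝ)..u, f t) := by
    filter_upwards [Ioo_mem_nhds hz0 hz1] with u hu
    rw [intervalIntegral.integral_symm, aux_main f hfc H hu.1 hu.2, neg_zero]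
  have hder0 : HasDerivAt (fun _ : ℝ => (0:ℝ)) (f z) z := hder.congr_of_eventuallyEq hloc
  have hfz : f z = 0 := (hder0.unique (hasDerivAt_const _ _))
  have : g₁ z - g₂ z = 0 := hfz
  linarith
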